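/- The map ℝ^r → (𝔾_m^r)^an sending ω to the weighted Gauss norm η_s associated to s = (e^{-ω_1}, …, e^{-ω_r}) is a continuous section of the tropicalization map trop, and it is a homeomorphism of ℝ^r onto its image (the skeleton S((𝔾_m^r)^an)), which is a closed subset of (𝔾_m^r)^an. -/

import Mathlib

open scoped NNReal

/-- The Berkovich analytification `(𝔾_m^r)^an` of the split torus over a complete
non-archimedean field `K`: multiplicative seminorms on `K[z_1^{±1},…,z_r^{±1}]`
(modelled as `AddMonoidAlgebra K (ℤ^r)`) extending the absolute value of `K`. -/
def TorusBerk (K : Type*) [NormedField K] (r : ℕ) : Type _ :=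
  {p : AddMonoidAlgebra K (Fin r → ℤ) → ℝ //
    (∀ f g, p (f * g) = p f * p g) ∧
    (∀ f g, p (f + g) ≤ max (p f) (p g)) ∧
    (∀ a : K, p (AddMonoidAlgebra.single 0 a) = ‖a‖) ∧
    (∀ f, 0 ≤ p f)}

noncomputable instance (K : Type*) [NormedField K] (r : ℕ) :
    TopologicalSpace (TorusBerk K r) := by
  unfold TorusBerk; infer_instance

/-- The tropicalization map `trop : (𝔾_m^r)^an → ℝ^r`. -/
noncomputable def tropMap {K : Type*} [NormedField K] {r : ℕ} (p : TorusBerk K r) :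
    Fin r → ℝ :=
  fun i => - Real.log (p.1 (AddMonoidAlgebra.single (Pi.single i 1) 1))

/-- The weighted Gauss norm `η_s` associated to `ω ∈ ℝ^r`, with weights
`s = (e^{-ω_1}, …, e^{-ω_r})`: `|∑ α_m z^m|_s = max_m |α_m| s^m`. -/
noncomputable def gaussFun {K : Type*} [NormedField K] {r : ℕ} (ω : Fin r → ℝ)
    (f : AddMonoidAlgebra K (Fin r → ℤ)) : ℝ :=
  ((f.coeff.support.sup fun m => ‖f.coeff m‖₊ * ∏ i, (Real.exp (-ω i)).toNNReal ^ (m i) : ℝ≥0) : ℝ)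

namespace GaussAux

variable {K : Type*} [NormedField K] {r : ℕ}

/-- The weight `s^m = ∏ s_i^{m_i}` with `s_i = e^{-ω_i}`. -/
noncomputable def expw (ω : Fin r → ℝ) (m : Fin r → ℤ) : ℝ≥0 :=
  ∏ i, (Real.exp (-ω i)).toNNReal ^ (m i)

lemma expw_pos (ω : Fin r → ℝ) (m : Fin r → ℤ) : 0 < expw ω m :=
  Finset.prod_pos fun i _ => zpow_pos (Real.toNNReal_pos.mpr (Real.exp_pos _)) _

lemma expw_ne_zero (ω : Fin r → ℝ) (m : Fin r → ℤ) : expw ω m ≠ 0 :=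
  (expw_pos ω m).ne'

lemma expw_add (ω : Fin r → ℝ) (m n : Fin r → ℤ) :
    expw ω (m + n) = expw ω m * expw ω n := by
  rw [expw, expw, expw, ← Finset.prod_mul_distrib]
  refine Finset.prod_congr rfl fun i _ => ?_
  rw [Pi.add_apply, zpow_add₀]
  exact (Real.toNNReal_pos.mpr (Real.exp_pos _)).ne'

lemma expw_zero (ω : Fin r → ℝ) : expw ω 0 = 1 := by
  simp [expw]

lemma exp_zpow (x : ℝ) (n : ℤ) : Real.exp x ^ n = Real.exp (n * x) := by
  rw [← Real.rpow_intCast, ← Real.exp_mul, mul_comm]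

lemma coe_expw (ω : Fin r → ℝ) (m : Fin r → ℤ) :
    (expw ω m : ℝ) = Real.exp (-∑ i, (m i : ℝ) * ω i) := by
  rw [expw, NNReal.coe_prod]
  have : ∀ i ∈ Finset.univ, ((((Real.exp (-ω i)).toNNReal : ℝ≥0) ^ (m i) : ℝ≥0) : ℝ)
      = Real.exp ((m i : ℝ) * (-ω i)) := by
    intro i _
    rw [NNReal.coe_zpow, Real.coe_toNNReal _ (Real.exp_nonneg _), exp_zpow]
  rw [Finset.prod_congr rfl this, ← Real.exp_sum]
  congr 1
  simp [mul_neg, Finset.sum_neg_distrib]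

/-- The Gauss norm, as an `ℝ≥0`-valued function. -/
noncomputable def gaussNN (ω : Fin r → ℝ) (f : AddMonoidAlgebra K (Fin r → ℤ)) : ℝ≥0 :=
  f.coeff.support.sup fun m => ‖f.coeff m‖₊ * expw ω m

lemma gaussFun_eq (ω : Fin r → ℝ) (f : AddMonoidAlgebra K (Fin r → ℤ)) :
    gaussFun ω f = ((gaussNN ω f : ℝ≥0) : ℝ) := rfl

lemma term_le_gaussNN (ω : Fin r → ℝ) (f : AddMonoidAlgebra K (Fin r → ℤ))
    (m : Fin r → ℤ) : ‖f.coeff m‖₊ * expw ω m ≤ gaussNN ω f := by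
  by_cases h : m ∈ f.coeff.support
  · exact Finset.le_sup (f := fun m => ‖f.coeff m‖₊ * expw ω m) h
  · rw [Finsupp.notMem_support_iff.mp h]
    simp only [nnnorm_zero, zero_mul]
    exact zero_le

lemma gaussNN_single (ω : Fin r → ℝ) (m : Fin r → ℤ) (a : K) :
    gaussNN ω (AddMonoidAlgebra.single m a) = ‖a‖₊ * expw ω m := by
  rcases eq_or_ne a 0 with rfl | ha
  · simp [gaussNN, AddMonoidAlgebra.coeff_single]
  · rw [gaussNN, AddMonoidAlgebra.coeff_single, Finsupp.support_single_ne_zero _ ha, Finset.sup_singleton,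
      Finsupp.single_eq_same]

lemma gaussNN_eq_zero (ω : Fin r → ℝ) {f : AddMonoidAlgebra K (Fin r → ℤ)}
    (hf : f = 0) : gaussNN ω f = 0 := by
  subst hf; simp [gaussNN]

variable [IsUltrametricDist K]

lemma gaussNN_add_le (ω : Fin r → ℝ) (f g : AddMonoidAlgebra K (Fin r → ℤ)) :
    gaussNN ω (f + g) ≤ max (gaussNN ω f) (gaussNN ω g) := by
  refine Finset.sup_le fun m _ => ?_
  have h1 : ‖(f + g).coeff m‖₊ ≤ max ‖f.coeff m‖₊ ‖g.coeff m‖₊ := by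
    rw [AddMonoidAlgebra.coeff_add, Finsupp.add_apply]
    exact IsUltrametricDist.nnnorm_add_le_max (f.coeff m) (g.coeff m)
  rcases max_cases ‖f.coeff m‖₊ ‖g.coeff m‖₊ with ⟨he, _⟩ | ⟨he, _⟩
  · exact le_max_of_le_left <|
      (mul_le_mul_left (h1.trans he.le) _).trans (term_le_gaussNN ω f m)
  · exact le_max_of_le_right <|
      (mul_le_mul_left (h1.trans he.le) _).trans (term_le_gaussNN ω g m)

lemma coeff_eq (f g : AddMonoidAlgebra K (Fin r → ℤ)) (k : Fin r → ℤ) :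
    (f * g).coeff k = ∑ p ∈ f.coeff.support ×ˢ g.coeff.support,
      if p.1 + p.2 = k then f.coeff p.1 * g.coeff p.2 else 0 := by
  classical
  rw [AddMonoidAlgebra.coeff_mul, Finsupp.sum, Finset.sum_product]
  exact Finset.sum_congr rfl fun a _ => rfl

lemma coeff_term_le (ω : Fin r → ℝ) (f g : AddMonoidAlgebra K (Fin r → ℤ))
    (k : Fin r → ℤ) :
    ‖(f * g).coeff k‖₊ * expw ω k ≤ gaussNN ω f * gaussNN ω g := by
  classical
  rw [coeff_eq]
  have hC : ‖∑ p ∈ f.coeff.support ×ˢ g.coeff.support,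
      (if p.1 + p.2 = k then f.coeff p.1 * g.coeff p.2 else 0)‖₊
      ≤ gaussNN ω f * gaussNN ω g / expw ω k := by
    refine IsUltrametricDist.nnnorm_sum_le_of_forall_le fun p _ => ?_
    split_ifs with hp
    · rw [nnnorm_mul, le_div_iff₀ (expw_pos ω k), ← hp, expw_add,
        mul_mul_mul_comm]
      exact mul_le_mul' (term_le_gaussNN ω f p.1) (term_le_gaussNN ω g p.2)
    · simp
  calc ‖∑ p ∈ f.coeff.support ×ˢ g.coeff.support,
        (if p.1 + p.2 = k then f.coeff p.1 * g.coeff p.2 else 0)‖₊ * expw ω k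
      ≤ (gaussNN ω f * gaussNN ω g / expw ω k) * expw ω k :=
        mul_le_mul_left hC _
    _ = gaussNN ω f * gaussNN ω g := div_mul_cancel₀ _ (expw_ne_zero ω k)

noncomputable instance lexGroup : LinearOrder (Lex (Fin r → ℤ)) := by
  letI : WellFoundedLT (Fin r) := inferInstance
  exact inferInstance

noncomputable instance (priority := 5000) lexLin : LinearOrder (Lex (Fin r → ℤ)) :=
  lexGroup

/-- Existence of a lexicographically maximal monomial attaining the Gauss norm. -/
lemma exists_lex_max (ω : Fin r → ℝ) {f : AddMonoidAlgebra K (Fin r → ℤ)}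
    (hf : f ≠ 0) :
    ∃ m₀ ∈ f.coeff.support, ‖f.coeff m₀‖₊ * expw ω m₀ = gaussNN ω f ∧
      ∀ m ∈ f.coeff.support, ‖f.coeff m‖₊ * expw ω m = gaussNN ω f → toLex m ≤ toLex m₀ := by
  classical
  set S : Finset (Fin r → ℤ) :=
    f.coeff.support.filter (fun m => ‖f.coeff m‖₊ * expw ω m = gaussNN ω f) with hS
  have hsne : f.coeff.support.Nonempty := Finsupp.support_nonempty_iff.mpr (mt AddMonoidAlgebra.coeff_eq_zero.mp hf)
  obtain ⟨m, hm, hmeq⟩ := Finset.exists_mem_eq_sup f.coeff.support hsne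
    (fun m => ‖f.coeff m‖₊ * expw ω m)
  have hSne : S.Nonempty := ⟨m, Finset.mem_filter.mpr ⟨hm, hmeq.symm⟩⟩
  obtain ⟨m₀, hm₀S, hmax⟩ := S.exists_max_image (fun m => (toLex m : Lex (Fin r → ℤ))) hSne
  rw [hS, Finset.mem_filter] at hm₀S
  exact ⟨m₀, hm₀S.1, hm₀S.2, fun n hn hneq =>
    hmax n (Finset.mem_filter.mpr ⟨hn, hneq⟩)⟩

lemma gaussNN_mul (ω : Fin r → ℝ) (f g : AddMonoidAlgebra K (Fin r → ℤ)) :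
    gaussNN ω (f * g) = gaussNN ω f * gaussNN ω g := by
  classical
  rcases eq_or_ne f 0 with rfl | hf
  · simp [gaussNN_eq_zero]
  rcases eq_or_ne g 0 with rfl | hg
  · simp [gaussNN_eq_zero]
  refine le_antisymm (Finset.sup_le fun k _ => coeff_term_le ω f g k) ?_
  obtain ⟨m₀, hm₀s, hm₀eq, hm₀max⟩ := exists_lex_max ω hf
  obtain ⟨n₀, hn₀s, hn₀eq, hn₀max⟩ := exists_lex_max ω hg
  have hfm₀ : f.coeff m₀ ≠ 0 := Finsupp.mem_support_iff.mp hm₀s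
  have hgn₀ : g.coeff n₀ ≠ 0 := Finsupp.mem_support_iff.mp hn₀s
  set k : Fin r → ℤ := m₀ + n₀ with hk
  set D : ℝ≥0 := ‖f.coeff m₀‖₊ * ‖g.coeff n₀‖₊ with hD
  have hDpos : 0 < D :=
    mul_pos (pos_iff_ne_zero.mpr (nnnorm_ne_zero_iff.mpr hfm₀))
      (pos_iff_ne_zero.mpr (nnnorm_ne_zero_iff.mpr hgn₀))
  -- every other pair contributing to the coefficient at `k` is strictly smaller
  have hstrict : ∀ a b : Fin r → ℤ, a + b = k → (a, b) ≠ (m₀, n₀) →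
      ‖f.coeff a‖₊ * ‖g.coeff b‖₊ < D := by
    intro a b hab hne
    have hle1 : ‖f.coeff a‖₊ * expw ω a ≤ gaussNN ω f := term_le_gaussNN ω f a
    have hle2 : ‖g.coeff b‖₊ * expw ω b ≤ gaussNN ω g := term_le_gaussNN ω g b
    have hMpos : 0 < gaussNN ω f := by
      refine lt_of_lt_of_le ?_ (term_le_gaussNN ω f m₀)
      exact mul_pos (pos_iff_ne_zero.mpr (nnnorm_ne_zero_iff.mpr hfm₀)) (expw_pos ω m₀)
    have hNpos : 0 < gaussNN ω g := by
      refine lt_of_lt_of_le ?_ (term_le_gaussNN ω g n₀)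
      exact mul_pos (pos_iff_ne_zero.mpr (nnnorm_ne_zero_iff.mpr hgn₀)) (expw_pos ω n₀)
    -- first: the weighted product inequality, strict
    have hmain : ‖f.coeff a‖₊ * expw ω a * (‖g.coeff b‖₊ * expw ω b) <
        gaussNN ω f * gaussNN ω g := by
      rcases lt_or_eq_of_le hle1 with h1 | h1
      · calc ‖f.coeff a‖₊ * expw ω a * (‖g.coeff b‖₊ * expw ω b)
            ≤ ‖f.coeff a‖₊ * expw ω a * gaussNN ω g := mul_le_mul_right hle2 _
          _ < gaussNN ω f * gaussNN ω g := mul_lt_mul_of_pos_right h1 hNpos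
      rcases lt_or_eq_of_le hle2 with h2 | h2
      · rw [h1]
        exact mul_lt_mul_of_pos_left h2 hMpos
      -- both attain the max: contradict lexicographic maximality
      exfalso
      have ha : a ∈ f.coeff.support := by
        rw [Finsupp.mem_support_iff]
        intro h0
        rw [h0] at h1
        simp at h1
        exact hMpos.ne' h1.symm
      have hb : b ∈ g.coeff.support := by
        rw [Finsupp.mem_support_iff]
        intro h0
        rw [h0] at h2
        simp at h2
        exact hNpos.ne' h2.symm
      have hal : toLex a ≤ toLex m₀ := hm₀max a ha h1
      have hbl : toLex b ≤ toLex n₀ := hn₀max b hb h2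
      have hsum : toLex a + toLex b = toLex m₀ + toLex n₀ := by
        have : toLex (a + b) = toLex (m₀ + n₀) := by rw [hab, hk]
        exact this
      have ham : toLex a = toLex m₀ := by
        by_contra hne'
        have : toLex a + toLex b < toLex m₀ + toLex n₀ :=
          add_lt_add_of_lt_of_le (lt_of_le_of_ne hal hne') hbl
        exact absurd hsum this.ne
      have hbn : toLex b = toLex n₀ := by
        have := hsum
        rw [ham] at this
        exact add_left_cancel this
      exact hne (Prod.ext (toLex.injective ham) (toLex.injective hbn))
    -- now remove the weights
    have hwk : expw ω a * expw ω b = expw ω k := by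
      rw [← expw_add, hab]
    have : (‖f.coeff a‖₊ * ‖g.coeff b‖₊) * expw ω k < D * expw ω k := by
      calc (‖f.coeff a‖₊ * ‖g.coeff b‖₊) * expw ω k
          = ‖f.coeff a‖₊ * expw ω a * (‖g.coeff b‖₊ * expw ω b) := by
            rw [← hwk]; ring
        _ < gaussNN ω f * gaussNN ω g := hmain
        _ = D * expw ω k := by
            rw [← hm₀eq, ← hn₀eq, hD, hk, expw_add]; ring
    exact lt_of_mul_lt_mul_right this zero_le
  -- compute the coefficient at `k`
  have hcoeff : ‖(f * g).coeff k‖₊ = D := by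
    have hmem : (m₀, n₀) ∈ f.coeff.support ×ˢ g.coeff.support :=
      Finset.mem_product.mpr ⟨hm₀s, hn₀s⟩
    have hsplit : (f * g).coeff k = f.coeff m₀ * g.coeff n₀ +
        ∑ p ∈ (f.coeff.support ×ˢ g.coeff.support).erase (m₀, n₀),
          (if p.1 + p.2 = k then f.coeff p.1 * g.coeff p.2 else 0) := by
      rw [coeff_eq, ← Finset.add_sum_erase _ _ hmem, if_pos rfl]
    have hrest : ‖∑ p ∈ (f.coeff.support ×ˢ g.coeff.support).erase (m₀, n₀),
        (if p.1 + p.2 = k then f.coeff p.1 * g.coeff p.2 else 0)‖₊ < D := by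
      refine lt_of_le_of_lt (Finset.nnnorm_sum_le_sup_nnnorm _ _) ?_
      rw [Finset.sup_lt_iff (by simpa using hDpos)]
      intro p hp
      split_ifs with hpk
      · rw [nnnorm_mul]
        exact hstrict p.1 p.2 hpk (Finset.ne_of_mem_erase hp)
      · simpa using hDpos
    rw [hsplit]
    have hne' : ‖f.coeff m₀ * g.coeff n₀‖₊ ≠ ‖∑ p ∈ (f.coeff.support ×ˢ g.coeff.support).erase (m₀, n₀),
        (if p.1 + p.2 = k then f.coeff p.1 * g.coeff p.2 else 0)‖₊ := by
      rw [nnnorm_mul]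
      exact (hrest.trans_le le_rfl).ne'
    rw [IsUltrametricDist.nnnorm_add_eq_max_of_nnnorm_ne_nnnorm hne',
      nnnorm_mul]
    exact max_eq_left hrest.le
  calc gaussNN ω f * gaussNN ω g
      = D * expw ω k := by
        rw [← hm₀eq, ← hn₀eq, hD, hk, expw_add]; ring
    _ = ‖(f * g).coeff k‖₊ * expw ω k := by rw [hcoeff]
    _ ≤ gaussNN ω (f * g) := term_le_gaussNN ω (f * g) k

/-- The Gauss norm as a point of the Berkovich torus. -/
noncomputable def sec (ω : Fin r → ℝ) : TorusBerk K r :=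
  ⟨fun f => ((gaussNN ω f : ℝ≥0) : ℝ), by
    refine ⟨fun f g => ?_, fun f g => ?_, fun a => ?_, fun f => (gaussNN ω f).coe_nonneg⟩
    · show ((gaussNN ω (f * g) : ℝ≥0) : ℝ) = ((gaussNN ω f : ℝ≥0) : ℝ) * ((gaussNN ω g : ℝ≥0) : ℝ)
      rw [gaussNN_mul]; push_cast; ring
    · have := gaussNN_add_le ω f g
      calc ((gaussNN ω (f + g) : ℝ≥0) : ℝ)
          ≤ ((max (gaussNN ω f) (gaussNN ω g) : ℝ≥0) : ℝ) := NNReal.coe_le_coe.mpr this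
        _ = max ((gaussNN ω f : ℝ≥0) : ℝ) ((gaussNN ω g : ℝ≥0) : ℝ) := by
            rcases max_cases (gaussNN ω f) (gaussNN ω g) with ⟨h1, h2⟩ | ⟨h1, h2⟩ <;>
              rw [h1] <;> [rw [max_eq_left (NNReal.coe_le_coe.mpr h2)];
                rw [max_eq_right (NNReal.coe_le_coe.mpr h2.le)]]
    · show ((gaussNN ω (AddMonoidAlgebra.single 0 a) : ℝ≥0) : ℝ) = ‖a‖
      rw [gaussNN_single, expw_zero, mul_one, coe_nnnorm]⟩

lemma sec_apply (ω : Fin r → ℝ) (f : AddMonoidAlgebra K (Fin r → ℤ)) :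
    (sec (K := K) ω).1 f = gaussFun ω f := rfl

lemma sec_single_one (ω : Fin r → ℝ) (i : Fin r) :
    (sec (K := K) ω).1 (AddMonoidAlgebra.single (Pi.single i 1) (1 : K)) =
      Real.exp (-ω i) := by
  show ((gaussNN ω (AddMonoidAlgebra.single (Pi.single i 1) (1 : K)) : ℝ≥0) : ℝ) = _
  rw [gaussNN_single, nnnorm_one, one_mul, coe_expw]
  congr 1
  rw [neg_inj]
  have : ∀ j ∈ Finset.univ, (((Pi.single i 1 : Fin r → ℤ) j : ℤ) : ℝ) * ω j
      = (if j = i then ω i else 0) := by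
    intro j _
    rcases eq_or_ne j i with rfl | hji
    · simp
    · simp [Pi.single_eq_of_ne hji, hji]
  rw [Finset.sum_congr rfl this, Finset.sum_ite_eq' Finset.univ i fun _ => ω i,
    if_pos (Finset.mem_univ i)]

lemma trop_sec (ω : Fin r → ℝ) : tropMap (sec (K := K) ω) = ω := by
  funext i
  rw [tropMap, sec_single_one, Real.log_exp, neg_neg]

lemma continuous_sec : Continuous (sec (K := K) (r := r)) := by
  apply Continuous.subtype_mk
  apply continuous_pi
  intro f
  have hterm : ∀ m : Fin r → ℤ, Continuous fun ω : Fin r → ℝ => ‖f.coeff m‖₊ * expw ω m := by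
    intro m
    have heq : (fun ω : Fin r → ℝ => ‖f.coeff m‖₊ * expw ω m) =
        fun ω => Real.toNNReal (‖f.coeff m‖ * Real.exp (-∑ i, (m i : ℝ) * ω i)) := by
      funext ω
      apply NNReal.coe_injective
      rw [NNReal.coe_mul, coe_nnnorm, coe_expw,
        Real.coe_toNNReal _ (mul_nonneg (norm_nonneg _) (Real.exp_nonneg _))]
    rw [heq]
    apply continuous_real_toNNReal.comp
    apply continuous_const.mul
    apply Real.continuous_exp.comp
    apply Continuous.neg
    exact continuous_finset_sum _ fun i _ => continuous_const.mul (continuous_apply i)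
  have : Continuous fun ω : Fin r → ℝ => (gaussNN ω f : ℝ≥0) := by
    exact Continuous.finset_sup_apply fun m _ => hterm m
  exact NNReal.continuous_coe.comp this

lemma eval_ne_zero (p : TorusBerk K r) (i : Fin r) :
    p.1 (AddMonoidAlgebra.single (Pi.single i 1) (1 : K)) ≠ 0 := by
  have h1 : p.1 (AddMonoidAlgebra.single (Pi.single i 1) (1 : K)) *
      p.1 (AddMonoidAlgebra.single (-(Pi.single i 1)) (1 : K)) = 1 := by
    rw [← p.2.1]
    rw [AddMonoidAlgebra.single_mul_single, add_neg_cancel, one_mul]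
    rw [p.2.2.2.1, norm_one]
  intro h0
  rw [h0, zero_mul] at h1
  exact zero_ne_one h1

lemma continuous_trop : Continuous (tropMap (K := K) (r := r)) := by
  apply continuous_pi
  intro i
  have heval : Continuous fun p : TorusBerk K r =>
      p.1 (AddMonoidAlgebra.single (Pi.single i 1) (1 : K)) :=
    (continuous_apply _).comp continuous_subtype_val
  show Continuous fun p : TorusBerk K r =>
    -Real.log (p.1 (AddMonoidAlgebra.single (Pi.single i 1) (1 : K)))
  refine continuous_iff_continuousAt.mpr fun p => ?_
  have hlog := ContinuousAt.comp (x := p)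
    (Real.continuousAt_log (eval_ne_zero p i)) heval.continuousAt
  exact hlog.neg

end GaussAux

/-- The map `ℝ^r → (𝔾_m^r)^an` sending `ω` to the weighted Gauss norm
`η_s` with `s = (e^{-ω_1},…,e^{-ω_r})` is a continuous section of the tropicalization
map, and a homeomorphism of `ℝ^r` onto its image (the skeleton `S((𝔾_m^r)^an)`),
which is a closed subset of `(𝔾_m^r)^an`. -/
theorem gauss_section_skeleton {K : Type*} [NormedField K]
    [IsUltrametricDist K] [IsAlgClosed K] [CompleteSpace K]
    (hnontriv : ∃ a : K, a ≠ 0 ∧ ‖a‖ ≠ 1) (r : ℕ) :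
    ∃ sec : (Fin r → ℝ) → TorusBerk K r,
      (∀ ω f, (sec ω).1 f = gaussFun ω f) ∧
      Continuous sec ∧
      (∀ ω, tropMap (sec ω) = ω) ∧
      Topology.IsEmbedding sec ∧
      IsClosed (Set.range sec) := by
  refine ⟨GaussAux.sec, fun ω f => GaussAux.sec_apply ω f, GaussAux.continuous_sec,
    GaussAux.trop_sec, ?_, ?_⟩
  · exact Function.LeftInverse.isEmbedding (fun ω => GaussAux.trop_sec ω)
      GaussAux.continuous_trop GaussAux.continuous_sec
  · have hrange : Set.range (GaussAux.sec (K := K) (r := r)) =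
        ⋂ f, {p : TorusBerk K r | (GaussAux.sec (tropMap p)).1 f = p.1 f} := by
      ext p
      simp only [Set.mem_range, Set.mem_iInter, Set.mem_setOf_eq]
      constructor
      · rintro ⟨ω, rfl⟩ f
        rw [GaussAux.trop_sec]
      · intro h
        refine ⟨tropMap p, ?_⟩
        apply Subtype.ext
        funext f
        exact h f
    rw [hrange]
    refine isClosed_iInter fun f => ?_
    have h1 : Continuous fun p : TorusBerk K r => (GaussAux.sec (tropMap p)).1 f :=
      (continuous_apply f).comp (continuous_subtype_val.comp
        (GaussAux.continuous_sec.comp GaussAux.continuous_trop))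
    have h2 : Continuous fun p : TorusBerk K r => p.1 f :=
      (continuous_apply f).comp continuous_subtype_val
    exact isClosed_eq h1 h2
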